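/- Let D=(V,A) be a directed acyclic graph with single source s, T ⊆ V∖{s} a set of receivers with λ(s,t) ≥ 1 for all t ∈ T. Let Z be the set of nodes not reachable from s after deleting all arcs incident to the maximal 1-sets containing receivers. Define f: A → {1,2} by f(a)=1 if a is incident to Z (head or tail in Z) and f(a)=2 otherwise. Then f satisfies: (1) every 2-valued arc uv with u ≠ s has a 2-valued arc entering u; (2) every 1-valued arc uv with u ≠ s either has a 1-valued arc entering u or λ(s,u) ≥ 2. -/

import Mathlib

attribute [local instance] Classical.propDecidable

/-- Number of arcs of `A` entering the vertex set `X`. -/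
def inDeg {V : Type*} [DecidableEq V] (A : Finset (V × V)) (X : Finset V) : ℕ :=
  (A.filter (fun a => a.1 ∉ X ∧ a.2 ∈ X)).card

/-- `lam A s v`: by Menger's theorem, the maximum number of arc-disjoint `s→v`
paths equals the minimum in-degree of a set containing `v` and avoiding `s`. -/
noncomputable def lam {V : Type*} [DecidableEq V] (A : Finset (V × V)) (s v : V) : ℕ :=
  sInf {n | ∃ X : Finset V, s ∉ X ∧ v ∈ X ∧ inDeg A X = n}

/-- A directed `u→v` path. -/
def IsPath {V : Type*} (A : Finset (V × V)) (u v : V) (l : List (V × V)) : Prop :=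
  l ≠ [] ∧ (∀ a ∈ l, a ∈ A) ∧ l.head?.map Prod.fst = some u ∧
    l.getLast?.map Prod.snd = some v ∧ l.Chain' (fun a b => a.2 = b.1)

/-- `v` is reachable from `s` using arcs of `A`. -/
def Reach {V : Type*} (A : Finset (V × V)) (s v : V) : Prop :=
  s = v ∨ ∃ l, IsPath A s v l

/-- `X` is an inclusion-wise maximal `1`-set. -/
def IsMaxOneSet {V : Type*} [DecidableEq V] (A : Finset (V × V)) (s : V)
    (X : Finset V) : Prop :=
  s ∉ X ∧ inDeg A X = 1 ∧
    ∀ Y : Finset V, s ∉ Y → inDeg A Y = 1 → X ⊆ Y → X = Y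

section PfHelpers
variable {V : Type*}

lemma isPath_tail {A : Finset (V × V)} {u v : V} {a c : V × V} {t : List (V × V)}
    (h : IsPath A u v (a :: c :: t)) : IsPath A a.2 v (c :: t) := by
  obtain ⟨-, hmem, hhead, hlast, hchain⟩ := h
  obtain ⟨hac, hchain'⟩ := List.isChain_cons_cons.mp hchain
  exact ⟨by simp, fun x hx => hmem x (List.mem_cons_of_mem _ hx), by simp [hac],
    by simpa [List.getLast?_cons_cons] using hlast, hchain'⟩

lemma isPath_head {A : Finset (V × V)} {u v : V} {a : V × V} {t : List (V × V)}
    (h : IsPath A u v (a :: t)) : a.1 = u := by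
  have := h.2.2.1; simpa using this

lemma reach_cons {A : Finset (V × V)} {a : V × V} (ha : a ∈ A) {x : V}
    (h : Reach A a.2 x) : Reach A a.1 x := by
  rcases h with rfl | ⟨l, hne, hmem, hhead, hlast, hchain⟩
  · exact Or.inr ⟨[a], by simp, by simpa using ha, by simp, by simp, List.isChain_singleton a⟩
  · obtain ⟨c, t, rfl⟩ := List.exists_cons_of_ne_nil hne
    refine Or.inr ⟨a :: c :: t, by simp, ?_, by simp, ?_, ?_⟩
    · intro x hx
      rcases List.mem_cons.mp hx with rfl | hx
      exacts [ha, hmem x hx]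
    · simpa [List.getLast?_cons_cons] using hlast
    · refine List.isChain_cons_cons.mpr ⟨?_, hchain⟩
      have : c.1 = a.2 := by simpa using hhead
      exact this.symm

lemma reach_snoc {A : Finset (V × V)} {s : V} {a : V × V} (ha : a ∈ A)
    (h : Reach A s a.1) : Reach A s a.2 := by
  rcases h with rfl | ⟨l, hne, hmem, hhead, hlast, hchain⟩
  · exact Or.inr ⟨[a], by simp, by simpa using ha, by simp, by simp, List.isChain_singleton a⟩
  · refine Or.inr ⟨l ++ [a], by simp, ?_, ?_, ?_, ?_⟩
    · intro x hx
      rcases List.mem_append.mp hx with hx | hx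
      · exact hmem x hx
      · simp at hx; subst hx; exact ha
    · obtain ⟨c, t, rfl⟩ := List.exists_cons_of_ne_nil hne
      simpa using hhead
    · simp [List.getLast?_concat]
    · refine List.isChain_append.mpr ⟨hchain, by simp, ?_⟩
      intro x hx y hy
      simp at hy; subst hy
      rw [List.getLast?_eq_getLast hne] at hx hlast
      simp at hx hlast
      rw [← hx]; exact hlast

lemma isPath_reach_last {A : Finset (V × V)} :
    ∀ (l : List (V × V)) (u v : V), IsPath A u v l →
      ∃ b ∈ l, b.2 = v ∧ Reach A u b.1 := by
  intro l
  induction l with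
  | nil => intro u v h; exact absurd rfl h.1
  | cons a rest ih =>
    intro u v h
    have hau : a.1 = u := isPath_head h
    cases rest with
    | nil =>
      have hav : a.2 = v := by simpa using h.2.2.2.1
      exact ⟨a, by simp, hav, Or.inl hau.symm⟩
    | cons c t =>
      obtain ⟨b, hb, hbv, hbr⟩ := ih a.2 v (isPath_tail h)
      have ha : a ∈ A := h.2.1 a (by simp)
      exact ⟨b, List.mem_cons_of_mem _ hb, hbv, hau ▸ reach_cons ha hbr⟩

lemma isPath_cross [DecidableEq V] {A : Finset (V × V)} {X : Finset V} :
    ∀ (l : List (V × V)) (u v : V), IsPath A u v l → u ∉ X → v ∈ X →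
      ∃ b ∈ l, b.1 ∉ X ∧ b.2 ∈ X := by
  intro l
  induction l with
  | nil => intro u v h; exact absurd rfl h.1
  | cons a rest ih =>
    intro u v h hu hv
    have hau : a.1 = u := isPath_head h
    cases rest with
    | nil =>
      have hav : a.2 = v := by simpa using h.2.2.2.1
      exact ⟨a, by simp, hau ▸ hu, hav ▸ hv⟩
    | cons c t =>
      by_cases h2 : a.2 ∈ X
      · exact ⟨a, by simp, hau ▸ hu, h2⟩
      · obtain ⟨b, hb, h1, h2⟩ := ih a.2 v (isPath_tail h) h2 hv
        exact ⟨b, List.mem_cons_of_mem _ hb, h1, h2⟩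

lemma reach_cross [DecidableEq V] {A : Finset (V × V)} {s u : V} {X : Finset V}
    (h : Reach A s u) (hs : s ∉ X) (hu : u ∈ X) :
    ∃ b ∈ A, b.1 ∉ X ∧ b.2 ∈ X := by
  rcases h with rfl | ⟨l, hl⟩
  · exact absurd hu hs
  · obtain ⟨b, hb, h1, h2⟩ := isPath_cross l s u hl hs hu
    exact ⟨b, hl.2.1 b hb, h1, h2⟩

lemma reach_last {A : Finset (V × V)} {s u : V} (h : Reach A s u) (hus : u ≠ s) :
    ∃ b ∈ A, b.2 = u ∧ Reach A s b.1 := by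
  rcases h with rfl | ⟨l, hl⟩
  · exact absurd rfl hus
  · obtain ⟨b, hb, h1, h2⟩ := isPath_reach_last l s u hl
    exact ⟨b, hl.2.1 b hb, h1, h2⟩

end PfHelpers

/-- The construction of a feasible height function for two layers:
`ZU` is the union of the maximal `1`-sets containing receivers, `A'` is obtained
from `A` by deleting all arcs incident to `ZU`, `Z` is the set of nodes not
reachable from `s` in `A'`, and `f` is `1` on arcs incident to `Z` and `2`
otherwise. Then: (1) every `2`-valued arc `uv` with `u ≠ s` has a `2`-valued arc
entering `u`; (2) every `1`-valued arc `uv` with `u ≠ s` either has a `1`-valued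
arc entering `u`, or `λ(s,u) ≥ 2`. -/
theorem two_layer_height_function_valid {V : Type*} [Fintype V] [DecidableEq V]
    (A : Finset (V × V)) (s : V) (T : Finset V) (hsT : s ∉ T)
    (ord : V → ℕ) (hord : ∀ a ∈ A, ord a.1 < ord a.2)
    (hreach : ∀ v : V, Reach A s v)
    (hlamT : ∀ t ∈ T, 1 ≤ lam A s t) :
    let ZU : Finset V := Finset.univ.filter (fun v =>
      ∃ X : Finset V, IsMaxOneSet A s X ∧ (∃ t ∈ T, t ∈ X) ∧ v ∈ X)
    let A' : Finset (V × V) := A.filter (fun a => a.1 ∉ ZU ∧ a.2 ∉ ZU)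
    let Z : Finset V := Finset.univ.filter (fun v => ¬ Reach A' s v)
    let f : V × V → ℕ := fun a => if a.1 ∈ Z ∨ a.2 ∈ Z then 1 else 2
    (∀ a ∈ A, a.1 ≠ s → f a = 2 → ∃ b ∈ A, b.2 = a.1 ∧ f b = 2) ∧
    (∀ a ∈ A, a.1 ≠ s → f a = 1 →
      (∃ b ∈ A, b.2 = a.1 ∧ f b = 1) ∨ 2 ≤ lam A s a.1) := by
  intro ZU A' Z f
  have hZmem : ∀ w : V, w ∈ Z ↔ ¬ Reach A' s w := by
    intro w; simp only [Z, Finset.mem_filter, Finset.mem_univ, true_and]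
  have hZUmem : ∀ w : V, w ∈ ZU ↔
      ∃ X : Finset V, IsMaxOneSet A s X ∧ (∃ t ∈ T, t ∈ X) ∧ w ∈ X := by
    intro w; simp only [ZU, Finset.mem_filter, Finset.mem_univ, true_and]
  have hA'mem : ∀ b : V × V, b ∈ A' ↔ b ∈ A ∧ b.1 ∉ ZU ∧ b.2 ∉ ZU := by
    intro b; simp only [A', Finset.mem_filter]
  have hfval : ∀ b : V × V, f b = if b.1 ∈ Z ∨ b.2 ∈ Z then 1 else 2 := fun _ => rfl
  -- ZU ⊆ Z
  have hZUZ : ∀ w : V, w ∈ ZU → w ∈ Z := by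
    intro w hw
    rw [hZmem]
    intro hr
    obtain ⟨X, hX, -, hwX⟩ := (hZUmem w).mp hw
    rcases eq_or_ne w s with rfl | hws
    · exact hX.1 hwX
    · obtain ⟨b, hb, hbw, -⟩ := reach_last hr hws
      exact ((hA'mem b).mp hb).2.2 (hbw ▸ hw)
  constructor
  · -- part (1)
    intro a ha hane hf2
    have hcond : ¬ (a.1 ∈ Z ∨ a.2 ∈ Z) := by
      intro hc
      rw [hfval a, if_pos hc] at hf2
      norm_num at hf2
    push_neg at hcond
    have hr1 : Reach A' s a.1 := by
      by_contra hr
      exact hcond.1 ((hZmem a.1).mpr hr)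
    obtain ⟨b, hb, hb2, hbr⟩ := reach_last hr1 hane
    refine ⟨b, ((hA'mem b).mp hb).1, hb2, ?_⟩
    rw [hfval b, if_neg]
    rintro (h1 | h2)
    · exact ((hZmem b.1).mp h1) hbr
    · exact hcond.1 (hb2 ▸ h2)
  · -- part (2)
    intro a ha hane hf1
    have hcond : a.1 ∈ Z ∨ a.2 ∈ Z := by
      by_contra hc
      rw [hfval a, if_neg hc] at hf1
      norm_num at hf1
    by_cases hu : a.1 ∈ Z
    · -- a.1 ∈ Z : any entering arc is 1-valued
      obtain ⟨b, hb, hb2, -⟩ := reach_last (hreach a.1) hane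
      exact Or.inl ⟨b, hb, hb2, by rw [hfval b, if_pos (Or.inr (hb2.symm ▸ hu))]⟩
    · have hv : a.2 ∈ Z := hcond.resolve_left hu
      by_cases hex : ∃ b ∈ A, b.2 = a.1 ∧ f b = 1
      · exact Or.inl hex
      · right
        -- a.1 reachable in A'
        have hru : Reach A' s a.1 := by
          by_contra hr; exact hu ((hZmem a.1).mpr hr)
        -- a ∉ A'
        have haA' : a ∉ A' := by
          intro hA
          exact ((hZmem a.2).mp hv) (reach_snoc hA hru)
        -- hence a.1 ∈ ZU or a.2 ∈ ZU; a.1 ∉ ZU since ZU ⊆ Z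
        have huZU : a.1 ∉ ZU := fun h => hu (hZUZ _ h)
        have hvZU : a.2 ∈ ZU := by
          by_contra hvZU
          exact haA' ((hA'mem a).mpr ⟨ha, huZU, hvZU⟩)
        obtain ⟨Zi, hZi, htZi, hvZi⟩ := (hZUmem a.2).mp hvZU
        obtain ⟨hsZi, hdegZi, hmaxZi⟩ := hZi
        have huZi : a.1 ∉ Zi := fun h => huZU ((hZUmem a.1).mpr ⟨Zi, ⟨hsZi, hdegZi, hmaxZi⟩, htZi, h⟩)
        -- a is the unique arc of A entering Zi
        have haZi : a ∈ A.filter (fun b => b.1 ∉ Zi ∧ b.2 ∈ Zi) :=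
          Finset.mem_filter.mpr ⟨ha, huZi, hvZi⟩
        have huniq : ∀ b ∈ A.filter (fun b => b.1 ∉ Zi ∧ b.2 ∈ Zi), b = a := by
          intro b hb
          exact Finset.card_le_one.mp (le_of_eq hdegZi) b hb a haZi
        -- key: every X with s ∉ X, a.1 ∈ X has inDeg ≥ 2
        have key : ∀ X : Finset V, s ∉ X → a.1 ∈ X → 2 ≤ inDeg A X := by
          intro X hsX huX
          by_contra hlt
          push_neg at hlt
          have hXle : inDeg A X ≤ 1 := Nat.lt_succ_iff.mp hlt
          set Y : Finset V := X ∪ Zi with hY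
          have hsY : s ∉ Y := by
            simp only [hY, Finset.mem_union]
            rintro (h | h); exacts [hsX h, hsZi h]
          have hsub : A.filter (fun b => b.1 ∉ Y ∧ b.2 ∈ Y) ⊆
              A.filter (fun b => b.1 ∉ X ∧ b.2 ∈ X) := by
            intro b hb
            obtain ⟨hbA, hb1, hb2⟩ := Finset.mem_filter.mp hb
            have hb1X : b.1 ∉ X := fun h => hb1 (Finset.mem_union_left _ h)
            rcases Finset.mem_union.mp hb2 with h2 | h2
            · exact Finset.mem_filter.mpr ⟨hbA, hb1X, h2⟩
            · have hb1Zi : b.1 ∉ Zi := fun h => hb1 (Finset.mem_union_right _ h)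
              have : b = a := huniq b (Finset.mem_filter.mpr ⟨hbA, hb1Zi, h2⟩)
              subst this
              exact absurd (Finset.mem_union_left _ huX) hb1
          have hYle : inDeg A Y ≤ 1 := le_trans (Finset.card_le_card hsub) hXle
          have hYge : 1 ≤ inDeg A Y := by
            obtain ⟨b, hbA, hb1, hb2⟩ := reach_cross (hreach a.1) hsY
              (Finset.mem_union_left _ huX)
            exact Finset.card_pos.mpr ⟨b, Finset.mem_filter.mpr ⟨hbA, hb1, hb2⟩⟩
          have hZiY : Zi = Y := hmaxZi Y hsY (le_antisymm hYle hYge)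
            (Finset.subset_union_right)
          exact huZi (hZiY ▸ Finset.mem_union_left _ huX)
        -- conclude on lam
        have hne : {n | ∃ X : Finset V, s ∉ X ∧ a.1 ∈ X ∧ inDeg A X = n}.Nonempty :=
          ⟨inDeg A (Finset.univ.erase s), Finset.univ.erase s, Finset.notMem_erase _ _,
            by simp [hane], rfl⟩
        refine le_csInf hne ?_
        rintro n ⟨X, h1, h2, rfl⟩
        exact key X h1 h2
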